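/- Let p ∈ (0,1] and θ ∈ [−π/2, π/2]. Set φ⁺ = φ_p(θ) and φ⁻ = −φ_p(−θ). Then for every x ∈ ℝ: cos x ≥ cos θ − A_{p,θ}·(x − θ)^p when x ≥ θ, and cos x ≥ cos θ − A_{p,−θ}·(θ − x)^p when x < θ. Moreover, equality holds if and only if x = θ, x = φ⁺, or x = φ⁻. -/

import Mathlib

set_option maxHeartbeats 1000000


/-- The set of values `(cos θ - cos x)/(x - θ)^p` for `x ∈ (θ, π)`. -/
noncomputable def Aset (p θ : ℝ) : Set ℝ :=
  (fun x : ℝ => (Real.cos θ - Real.cos x) / (x - θ) ^ p) '' Set.Ioo θ Real.pi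

/-- `A p θ` is the supremum of `(cos θ - cos x)/(x - θ)^p` over `x ∈ (θ, π)`. -/
noncomputable def A (p θ : ℝ) : ℝ := sSup (Aset p θ)

open Real Set

noncomputable def st6ff (B p θ x : ℝ) : ℝ := B * (x - θ) ^ p + (Real.cos x - Real.cos θ)
noncomputable def st6f1 (B p θ x : ℝ) : ℝ := B * p * (x - θ) ^ (p - 1) - Real.sin x
noncomputable def st6f2 (B p θ x : ℝ) : ℝ := B * (p * (p - 1)) * (x - θ) ^ (p - 2) - Real.cos x
noncomputable def st6f3 (B p θ x : ℝ) : ℝ :=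
  B * (p * ((p - 1) * (p - 2))) * (x - θ) ^ (p - 3) + Real.sin x

lemma st6hd0 (B p θ y : ℝ) (hy : θ < y) : HasDerivAt (st6ff B p θ) (st6f1 B p θ y) y := by
  have h0 : y - θ ≠ 0 := sub_ne_zero.2 (ne_of_gt hy)
  have h1 : HasDerivAt (fun z : ℝ => z - θ) 1 y := (hasDerivAt_id y).sub_const θ
  have h2 := h1.rpow_const (p := p) (Or.inl h0)
  have h3 := (h2.const_mul B).add ((Real.hasDerivAt_cos y).sub_const (Real.cos θ))
  refine h3.congr_deriv ?_
  unfold st6f1; ring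

lemma st6hd1 (B p θ y : ℝ) (hy : θ < y) : HasDerivAt (st6f1 B p θ) (st6f2 B p θ y) y := by
  have h0 : y - θ ≠ 0 := sub_ne_zero.2 (ne_of_gt hy)
  have h1 : HasDerivAt (fun z : ℝ => z - θ) 1 y := (hasDerivAt_id y).sub_const θ
  have h2 := h1.rpow_const (p := p - 1) (Or.inl h0)
  have h3 := (h2.const_mul (B * p)).sub (Real.hasDerivAt_sin y)
  refine h3.congr_deriv ?_
  unfold st6f2
  rw [show p - 1 - 1 = p - 2 by ring]
  ring

lemma st6hd2 (B p θ y : ℝ) (hy : θ < y) : HasDerivAt (st6f2 B p θ) (st6f3 B p θ y) y := by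
  have h0 : y - θ ≠ 0 := sub_ne_zero.2 (ne_of_gt hy)
  have h1 : HasDerivAt (fun z : ℝ => z - θ) 1 y := (hasDerivAt_id y).sub_const θ
  have h2 := h1.rpow_const (p := p - 2) (Or.inl h0)
  have h3 := (h2.const_mul (B * (p * (p - 1)))).sub (Real.hasDerivAt_cos y)
  refine h3.congr_deriv ?_
  unfold st6f3
  rw [show p - 2 - 1 = p - 3 by ring]
  ring

lemma st6fcont (B p θ : ℝ) (hp : 0 < p) : Continuous (st6ff B p θ) := by
  apply Continuous.add
  · apply Continuous.mul continuous_const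
    apply continuous_iff_continuousAt.2
    intro y
    exact (continuousAt_id.sub continuousAt_const).rpow_const (Or.inr hp.le)
  · exact Real.continuous_cos.sub continuous_const

lemma st6f1cont (B p θ : ℝ) (s : Set ℝ) (hs : s ⊆ Ioi θ) : ContinuousOn (st6f1 B p θ) s := by
  intro y hy
  have h0 : y - θ ≠ 0 := sub_ne_zero.2 (ne_of_gt (hs hy))
  have hc : ContinuousAt (st6f1 B p θ) y := by
    unfold st6f1
    exact (((continuousAt_id.sub continuousAt_const).rpow_const (Or.inl h0)).const_mul _).sub
      Real.continuous_sin.continuousAt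
  exact hc.continuousWithinAt

lemma st6f2cont (B p θ : ℝ) (s : Set ℝ) (hs : s ⊆ Ioi θ) : ContinuousOn (st6f2 B p θ) s := by
  intro y hy
  have h0 : y - θ ≠ 0 := sub_ne_zero.2 (ne_of_gt (hs hy))
  have hc : ContinuousAt (st6f2 B p θ) y := by
    unfold st6f2
    exact (((continuousAt_id.sub continuousAt_const).rpow_const (Or.inl h0)).const_mul _).sub
      Real.continuous_cos.continuousAt
  exact hc.continuousWithinAt

lemma st6C2 (s : ℝ) (h0 : 0 ≤ s) (h1 : s ≤ π / 2) :
    Real.cos s - s * Real.sin s ≤ Real.cos s ^ 2 := by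
  have hpi := Real.pi_pos
  set w := s / 2 with hw
  have hw0 : 0 ≤ w := by rw [hw]; linarith
  have hwle : w ≤ π / 2 := by rw [hw]; linarith
  have hs2 : s = 2 * w := by rw [hw]; ring
  have hsin : Real.sin s = 2 * Real.sin w * Real.cos w := by rw [hs2, Real.sin_two_mul]
  have hcos : Real.cos s = 2 * Real.cos w ^ 2 - 1 := by rw [hs2, Real.cos_two_mul]
  have pyth := Real.sin_sq_add_cos_sq w
  have hsw : Real.sin w ≤ w := Real.sin_le hw0
  have hsw0 : 0 ≤ Real.sin w := Real.sin_nonneg_of_nonneg_of_le_pi hw0 (by linarith)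
  have hcw0 : 0 ≤ Real.cos w := Real.cos_nonneg_of_mem_Icc ⟨by linarith, hwle⟩
  have hcs_le : Real.cos s ≤ Real.cos w :=
    Real.cos_le_cos_of_nonneg_of_le_pi hw0 (by linarith) (by linarith)
  have e1 : 1 - Real.cos s = 2 * Real.sin w ^ 2 := by nlinarith [hcos, pyth]
  have e1' : Real.cos s - Real.cos s ^ 2 = Real.cos s * (2 * Real.sin w ^ 2) := by
    rw [← e1]; ring
  have m1 : Real.cos s * Real.sin w ^ 2 ≤ Real.cos w * Real.sin w ^ 2 :=
    mul_le_mul_of_nonneg_right hcs_le (sq_nonneg _)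
  have m2 : Real.cos w * Real.sin w ^ 2 ≤ Real.cos w * (Real.sin w * w) := by
    have h : Real.sin w ^ 2 ≤ Real.sin w * w := by nlinarith [hsw, hsw0]
    exact mul_le_mul_of_nonneg_left h hcw0
  have m3 : 0 ≤ w * (Real.sin w * Real.cos w) := mul_nonneg hw0 (mul_nonneg hsw0 hcw0)
  have e5 : s * Real.sin s = 4 * (w * (Real.sin w * Real.cos w)) := by
    rw [hsin, hs2]; ring
  nlinarith [e1', m1, m2, m3, e5]

lemma st6claimH (p θ φ : ℝ) (hp : 0 < p) (hp1 : p ≤ 1) (hθ : |θ| ≤ π / 2)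
    (hφa : |θ| < φ) (hφπ : φ < π)
    (heq : p * (Real.cos φ - Real.cos θ) + (φ - θ) * Real.sin φ = 0) :
    (1 - p) * Real.sin φ + (φ - θ) * Real.cos φ < 0 := by
  have hpi := Real.pi_pos
  have habs := abs_le.1 hθ
  have ha0 : 0 ≤ |θ| := abs_nonneg θ
  have haθ := le_abs_self θ
  have hnegθ := neg_abs_le θ
  have hθφ : θ < φ := lt_of_le_of_lt haθ hφa
  have ht : 0 < φ - θ := sub_pos.2 hθφ
  have hφ0 : 0 < φ := lt_of_le_of_lt ha0 hφa
  have hsφ : 0 < Real.sin φ := Real.sin_pos_of_pos_of_lt_pi hφ0 hφπ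
  have hptD : (φ - θ) * Real.sin φ = p * (Real.cos θ - Real.cos φ) := by linarith
  have hD0 : 0 < Real.cos θ - Real.cos φ := by
    by_contra hcon
    push_neg at hcon
    have h2 := mul_nonneg hp.le (neg_nonneg.2 hcon)
    have h3 := mul_pos ht hsφ
    nlinarith [h2, h3, hptD]
  have hu0 : 0 < (φ - θ) / 2 := by linarith
  have huπ : (φ - θ) / 2 < π := by linarith
  have hv0 : 0 < (φ + θ) / 2 := by linarith
  have hvπ : (φ + θ) / 2 < π := by linarith
  have hDuv : Real.cos θ - Real.cos φ =
      2 * Real.sin ((φ + θ) / 2) * Real.sin ((φ - θ) / 2) := by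
    rw [Real.cos_sub_cos]
    rw [show (θ + φ) / 2 = (φ + θ) / 2 by ring, show (θ - φ) / 2 = -((φ - θ) / 2) by ring,
      Real.sin_neg]
    ring
  have hsu_pos : 0 < Real.sin ((φ - θ) / 2) := Real.sin_pos_of_pos_of_lt_pi hu0 huπ
  have hsv_pos : 0 < Real.sin ((φ + θ) / 2) := Real.sin_pos_of_pos_of_lt_pi hv0 hvπ
  have hφhalf : π / 2 < φ := by
    by_contra hcon
    push_neg at hcon
    have hvφ : (φ + θ) / 2 < φ := by linarith
    have hsv : Real.sin ((φ + θ) / 2) < Real.sin φ :=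
      Real.strictMonoOn_sin ⟨by linarith, by linarith⟩ ⟨by linarith, hcon⟩ hvφ
    have hsuu : Real.sin ((φ - θ) / 2) ≤ (φ - θ) / 2 := Real.sin_le hu0.le
    have a1 := mul_le_mul_of_nonneg_left hsuu
      (by linarith : (0:ℝ) ≤ 2 * Real.sin ((φ + θ) / 2))
    have a2 := mul_lt_mul_of_pos_right hsv hu0
    have hlt : Real.cos θ - Real.cos φ < (φ - θ) * Real.sin φ := by
      rw [hDuv]; linarith [a1, a2]
    have h4 := mul_nonneg (sub_nonneg.2 hp1) hD0.le
    linarith [hlt, hptD, h4]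
  have hcφ : Real.cos φ < 0 := Real.cos_neg_of_pi_div_two_lt_of_lt hφhalf (by linarith)
  have hDt : Real.cos θ - Real.cos φ < φ - θ := by
    have h1 : Real.sin ((φ - θ) / 2) < (φ - θ) / 2 := Real.sin_lt hu0
    have h2 : Real.sin ((φ + θ) / 2) ≤ 1 := Real.sin_le_one _
    have b1 := mul_le_mul_of_nonneg_right h2 hsu_pos.le
    rw [hDuv]; nlinarith [b1, h1, hsu_pos]
  have hDG : (Real.cos θ - Real.cos φ) * (Real.sin φ + (φ - θ) * Real.cos φ) <
      (φ - θ) * Real.sin φ ^ 2 := by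
    rcases le_or_gt (Real.sin φ + (φ - θ) * Real.cos φ) 0 with hc | hc
    · have c1 := mul_nonneg hD0.le (neg_nonneg.2 hc)
      have c2 := mul_pos ht (mul_pos hsφ hsφ)
      nlinarith [c1, c2]
    · have step1 := mul_lt_mul_of_pos_right hDt hc
      have hC2 := st6C2 (φ - π / 2) (by linarith) (by linarith)
      have hs1 : Real.cos (φ - π / 2) = Real.sin φ := by
        rw [show φ - π / 2 = -(π / 2 - φ) by ring, Real.cos_neg, Real.cos_pi_div_two_sub]
      have hs2 : Real.sin (φ - π / 2) = -Real.cos φ := by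
        rw [show φ - π / 2 = -(π / 2 - φ) by ring, Real.sin_neg, Real.sin_pi_div_two_sub]
      rw [hs1, hs2] at hC2
      have key : Real.sin φ + (φ - π / 2) * Real.cos φ ≤ Real.sin φ ^ 2 := by nlinarith [hC2]
      have hts : φ - π / 2 ≤ φ - θ := by linarith
      have d1 := mul_le_mul_of_nonneg_left key ht.le
      have d2 := mul_nonneg ht.le
        (mul_nonneg (sub_nonneg.2 hts) (neg_nonneg.2 hcφ.le))
      nlinarith [step1, d1, d2]
  have e : (φ - θ) * Real.sin φ ^ 2 = p * (Real.cos θ - Real.cos φ) * Real.sin φ := by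
    rw [sq]; linear_combination Real.sin φ * hptD
  have hfin : (Real.cos θ - Real.cos φ) * ((1 - p) * Real.sin φ + (φ - θ) * Real.cos φ) < 0 := by
    nlinarith [hDG, e]
  by_contra hcon
  push_neg at hcon
  have := mul_nonneg hD0.le hcon
  linarith [hfin, this]

lemma st6core (B p θ φ : ℝ) (hp : 0 < p) (hp1 : p ≤ 1) (hθ : |θ| ≤ π / 2)
    (hφa : |θ| < φ) (hφπ : φ < π)
    (hB : B * (φ - θ) ^ p = Real.cos θ - Real.cos φ)
    (heq : p * (Real.cos φ - Real.cos θ) + (φ - θ) * Real.sin φ = 0)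
    (hBpos : 0 < B) :
    ∀ x, θ < x → x ≠ φ → Real.cos θ - Real.cos x < B * (x - θ) ^ p := by
  have hpi := Real.pi_pos
  have habs := abs_le.1 hθ
  have ha0 : 0 ≤ |θ| := abs_nonneg θ
  have haθ := le_abs_self θ
  have hnegθ := neg_abs_le θ
  have hθφ : θ < φ := lt_of_le_of_lt haθ hφa
  have htφ : 0 < φ - θ := sub_pos.2 hθφ
  have haπ : |θ| < π := by linarith
  have hpow1 : (φ - θ) ^ (p - 1) = (φ - θ) ^ p / (φ - θ) := by
    rw [Real.rpow_sub htφ, Real.rpow_one]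
  have hpow2 : (φ - θ) ^ (p - 2) = (φ - θ) ^ (p - 1) / (φ - θ) := by
    rw [show p - 2 = p - 1 - 1 by ring, Real.rpow_sub htφ (p - 1) 1, Real.rpow_one]
  have hB2 : B * p * (φ - θ) ^ (p - 1) = Real.sin φ := by
    rw [hpow1]
    field_simp
    linear_combination p * hB - heq
  -- values at φ
  have hf_phi : st6ff B p θ φ = 0 := by unfold st6ff; linarith
  have hf1_phi : st6f1 B p θ φ = 0 := by unfold st6f1; linarith
  have hf2_phi : 0 < st6f2 B p θ φ := by
    have hH := st6claimH p θ φ hp hp1 hθ hφa hφπ heq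
    have hval : st6f2 B p θ φ = ((p - 1) * Real.sin φ - (φ - θ) * Real.cos φ) / (φ - θ) := by
      unfold st6f2
      rw [hpow2]
      field_simp
      linear_combination (p - 1) * hB2
    rw [hval]
    apply div_pos (by linarith) htφ
  -- monotonicity helpers
  have monoF1 : ∀ l r : ℝ, θ < l → (∀ y ∈ Ioo l r, 0 < st6f2 B p θ y) →
      StrictMonoOn (st6f1 B p θ) (Icc l r) := by
    intro l r hl hpos
    apply strictMonoOn_of_deriv_pos (convex_Icc l r)
      (st6f1cont B p θ _ (fun y hy => mem_Ioi.2 (lt_of_lt_of_le hl hy.1)))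
    intro y hy
    rw [interior_Icc] at hy
    rw [(st6hd1 B p θ y (lt_trans hl hy.1)).deriv]
    exact hpos y hy
  have antiF1 : ∀ l r : ℝ, θ < l → (∀ y ∈ Ioo l r, st6f2 B p θ y < 0) →
      StrictAntiOn (st6f1 B p θ) (Icc l r) := by
    intro l r hl hneg
    apply strictAntiOn_of_deriv_neg (convex_Icc l r)
      (st6f1cont B p θ _ (fun y hy => mem_Ioi.2 (lt_of_lt_of_le hl hy.1)))
    intro y hy
    rw [interior_Icc] at hy
    rw [(st6hd1 B p θ y (lt_trans hl hy.1)).deriv]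
    exact hneg y hy
  have monoF : ∀ l r : ℝ, θ ≤ l → (∀ y ∈ Ioo l r, 0 < st6f1 B p θ y) →
      StrictMonoOn (st6ff B p θ) (Icc l r) := by
    intro l r hl hpos
    apply strictMonoOn_of_deriv_pos (convex_Icc l r) (st6fcont B p θ hp).continuousOn
    intro y hy
    rw [interior_Icc] at hy
    rw [(st6hd0 B p θ y (lt_of_le_of_lt hl hy.1)).deriv]
    exact hpos y hy
  have antiF : ∀ l r : ℝ, θ ≤ l → (∀ y ∈ Ioo l r, st6f1 B p θ y < 0) →
      StrictAntiOn (st6ff B p θ) (Icc l r) := by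
    intro l r hl hneg
    apply strictAntiOn_of_deriv_neg (convex_Icc l r) (st6fcont B p θ hp).continuousOn
    intro y hy
    rw [interior_Icc] at hy
    rw [(st6hd0 B p θ y (lt_of_le_of_lt hl hy.1)).deriv]
    exact hneg y hy
  -- f2 strictly monotone globally
  have M0 : StrictMonoOn (st6f2 B p θ) (Ioc |θ| π) := by
    apply strictMonoOn_of_deriv_pos (convex_Ioc _ _)
      (st6f2cont B p θ _ (fun y hy => mem_Ioi.2 (lt_of_le_of_lt haθ hy.1)))
    intro y hy
    rw [interior_Ioc] at hy
    rw [(st6hd2 B p θ y (lt_of_le_of_lt haθ hy.1)).deriv]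
    unfold st6f3
    have hsin : 0 < Real.sin y := Real.sin_pos_of_pos_of_lt_pi (lt_of_le_of_lt ha0 hy.1) hy.2
    have h12 : 0 ≤ (p - 1) * (p - 2) := by nlinarith
    have hcoef : 0 ≤ B * (p * ((p - 1) * (p - 2))) :=
      mul_nonneg hBpos.le (mul_nonneg hp.le h12)
    have hterm := mul_nonneg hcoef
      (Real.rpow_nonneg (by linarith [lt_of_le_of_lt haθ hy.1] : (0:ℝ) ≤ y - θ) (p - 3))
    linarith
  -- right side
  have hf2pos : ∀ y ∈ Ioc φ π, 0 < st6f2 B p θ y := by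
    rintro y ⟨h1, h2⟩
    have := M0 ⟨hφa, hφπ.le⟩ ⟨lt_trans hφa h1, h2⟩ h1
    linarith
  have hf1posR : ∀ y ∈ Ioc φ π, 0 < st6f1 B p θ y := by
    rintro y ⟨h1, h2⟩
    have hm := monoF1 φ π hθφ (fun z hz => hf2pos z ⟨hz.1, hz.2.le⟩)
    have := hm ⟨le_rfl, hφπ.le⟩ ⟨h1.le, h2⟩ h1
    rw [hf1_phi] at this
    exact this
  have hfposR : ∀ y ∈ Ioc φ π, 0 < st6ff B p θ y := by
    rintro y ⟨h1, h2⟩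
    have hm := monoF φ π hθφ.le (fun z hz => hf1posR z ⟨hz.1, hz.2.le⟩)
    have := hm ⟨le_rfl, hφπ.le⟩ ⟨h1.le, h2⟩ h1
    rw [hf_phi] at this
    exact this
  -- left side
  have hfposL : ∀ x ∈ Ioo |θ| φ, 0 < st6ff B p θ x := by
    rintro x ⟨hxa, hxφ⟩
    have hθx : θ < x := lt_of_le_of_lt haθ hxa
    by_cases hcase : ∀ y ∈ Ioo x φ, 0 < st6f2 B p θ y
    · have hmono := monoF1 x φ hθx hcase
      have hf1neg : ∀ y ∈ Ioo x φ, st6f1 B p θ y < 0 := by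
        rintro y ⟨h1, h2⟩
        have := hmono ⟨h1.le, h2.le⟩ ⟨hxφ.le, le_rfl⟩ h2
        rw [hf1_phi] at this
        exact this
      have hanti := antiF x φ hθx.le hf1neg
      have := hanti ⟨le_rfl, hxφ.le⟩ ⟨hxφ.le, le_rfl⟩ hxφ
      rw [hf_phi] at this
      exact this
    · push_neg at hcase
      obtain ⟨c, hc, hc2⟩ := hcase
      have hcont : ContinuousOn (st6f2 B p θ) (Icc c φ) :=
        st6f2cont B p θ _ (fun y hy => mem_Ioi.2 (lt_of_lt_of_le (lt_trans hθx hc.1) hy.1))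
      have hiv := intermediate_value_Icc hc.2.le hcont
      obtain ⟨c₀, hc₀mem, hc₀⟩ := hiv ⟨hc2, hf2_phi.le⟩
      have hc₀φ : c₀ < φ := by
        rcases lt_or_eq_of_le hc₀mem.2 with h | h
        · exact h
        · rw [h] at hc₀; exact absurd hc₀ (ne_of_gt hf2_phi)
      have hxc₀ : x < c₀ := lt_of_lt_of_le hc.1 hc₀mem.1
      have hc₀a : |θ| < c₀ := lt_trans hxa hxc₀
      have hc₀π : c₀ ≤ π := le_trans hc₀mem.2 hφπ.le
      have hneg : ∀ y, |θ| < y → y < c₀ → st6f2 B p θ y < 0 := by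
        intro y h1 h2
        have := M0 ⟨h1, by linarith⟩ ⟨hc₀a, hc₀π⟩ h2
        rw [hc₀] at this
        exact this
      have hposr : ∀ y, c₀ < y → y ≤ π → 0 < st6f2 B p θ y := by
        intro y h1 h2
        have := M0 ⟨hc₀a, hc₀π⟩ ⟨lt_trans hc₀a h1, h2⟩ h1
        rw [hc₀] at this
        exact this
      by_cases hsign : st6f1 B p θ x ≤ 0
      · have hf1neg : ∀ y ∈ Ioo x φ, st6f1 B p θ y < 0 := by
          rintro y ⟨h1, h2⟩
          rcases le_or_gt y c₀ with h3 | h3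
          · have hanti := antiF1 x c₀ hθx (fun z hz => hneg z (lt_trans hxa hz.1) hz.2)
            have := hanti ⟨le_rfl, hxc₀.le⟩ ⟨h1.le, h3⟩ h1
            linarith
          · have hmono := monoF1 c₀ φ (lt_of_le_of_lt haθ hc₀a)
              (fun z hz => hposr z hz.1 (le_trans hz.2.le hφπ.le))
            have := hmono ⟨h3.le, h2.le⟩ ⟨hc₀φ.le, le_rfl⟩ h2
            rw [hf1_phi] at this
            exact this
        have hanti := antiF x φ hθx.le hf1neg
        have := hanti ⟨le_rfl, hxφ.le⟩ ⟨hxφ.le, le_rfl⟩ hxφ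
        rw [hf_phi] at this
        exact this
      · push_neg at hsign
        have hf1pos : ∀ y ∈ Ioo |θ| x, 0 < st6f1 B p θ y := by
          rintro y ⟨h1, h2⟩
          have hanti := antiF1 y x (lt_of_le_of_lt haθ h1)
            (fun z hz => hneg z (lt_trans h1 hz.1) (lt_trans hz.2 hxc₀))
          have := hanti ⟨le_rfl, h2.le⟩ ⟨h2.le, le_rfl⟩ h2
          linarith
        have hmono := monoF |θ| x haθ hf1pos
        have hfa : 0 ≤ st6ff B p θ |θ| := by
          unfold st6ff
          rw [Real.cos_abs]
          have : 0 ≤ B * (|θ| - θ) ^ p :=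
            mul_nonneg hBpos.le (Real.rpow_nonneg (by linarith) p)
          linarith
        have := hmono ⟨le_rfl, hxa.le⟩ ⟨hxa.le, le_rfl⟩ hxa
        linarith
  -- conclusion
  intro x hθx hxφ
  suffices hs : 0 < st6ff B p θ x by unfold st6ff at hs; linarith
  rcases le_or_gt x |θ| with hxa | hxa
  · have hxabs : |x| ≤ |θ| := abs_le.2 ⟨by linarith, hxa⟩
    have h1 : Real.cos θ ≤ Real.cos x := by
      calc Real.cos θ = Real.cos |θ| := (Real.cos_abs θ).symm
        _ ≤ Real.cos |x| := Real.cos_le_cos_of_nonneg_of_le_pi (abs_nonneg x) (by linarith) hxabs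
        _ = Real.cos x := Real.cos_abs x
    have h2 : 0 < B * (x - θ) ^ p :=
      mul_pos hBpos (Real.rpow_pos_of_pos (by linarith) p)
    unfold st6ff
    linarith
  · rcases le_or_gt x π with hxπ | hxπ
    · rcases lt_trichotomy x φ with h | h | h
      · exact hfposL x ⟨hxa, h⟩
      · exact absurd h hxφ
      · exact hfposR x ⟨h, hxπ⟩
    · have hfπ : 0 < st6ff B p θ π := hfposR π ⟨hφπ, le_rfl⟩
      unfold st6ff at hfπ ⊢
      rw [Real.cos_pi] at hfπ
      have h1 : B * (π - θ) ^ p ≤ B * (x - θ) ^ p :=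
        mul_le_mul_of_nonneg_left (Real.rpow_le_rpow (by linarith) (by linarith) hp.le) hBpos.le
      have h2 : -1 ≤ Real.cos x := Real.neg_one_le_cos x
      linarith

lemma st6main (p θ φ : ℝ) (hp : 0 < p) (hp1 : p ≤ 1) (hθ : |θ| ≤ π / 2)
    (hφa : |θ| < φ) (hφπ : φ < π)
    (heq : p * (Real.cos φ - Real.cos θ) + (φ - θ) * Real.sin φ = 0) :
    Real.cos θ - A p θ * (φ - θ) ^ p = Real.cos φ ∧
      ∀ x, θ < x → x ≠ φ → Real.cos θ - A p θ * (x - θ) ^ p < Real.cos x := by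
  have hpi := Real.pi_pos
  have ha0 : 0 ≤ |θ| := abs_nonneg θ
  have haθ := le_abs_self θ
  have hθφ : θ < φ := lt_of_le_of_lt haθ hφa
  have htφ : 0 < φ - θ := sub_pos.2 hθφ
  have hrp : (0:ℝ) < (φ - θ) ^ p := Real.rpow_pos_of_pos htφ p
  have hcosφ : Real.cos φ < Real.cos θ := by
    calc Real.cos φ < Real.cos |θ| := by
          refine Real.strictAntiOn_cos ⟨ha0, by linarith⟩ ⟨by linarith, hφπ.le⟩ hφa
      _ = Real.cos θ := Real.cos_abs θ
  set B := (Real.cos θ - Real.cos φ) / (φ - θ) ^ p with hBdef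
  have hB : B * (φ - θ) ^ p = Real.cos θ - Real.cos φ := div_mul_cancel₀ _ (ne_of_gt hrp)
  have hBpos : 0 < B := div_pos (by linarith) hrp
  have hcore := st6core B p θ φ hp hp1 hθ hφa hφπ hB heq hBpos
  have hub : ∀ y ∈ Aset p θ, y ≤ B := by
    rintro y ⟨x, ⟨hx1, hx2⟩, rfl⟩
    show (Real.cos θ - Real.cos x) / (x - θ) ^ p ≤ B
    have hrx : (0:ℝ) < (x - θ) ^ p := Real.rpow_pos_of_pos (by linarith) p
    rw [div_le_iff₀ hrx]
    by_cases hxφ : x = φ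
    · subst hxφ
      exact le_of_eq hB.symm
    · exact (hcore x hx1 hxφ).le
  have hmem : B ∈ Aset p θ := ⟨φ, ⟨hθφ, hφπ⟩, by rw [hBdef]⟩
  have hA : A p θ = B := by
    have hg : IsGreatest (Aset p θ) B := ⟨hmem, hub⟩
    exact hg.csSup_eq
  constructor
  · rw [hA]; linarith
  · intro x h1 h2
    have := hcore x h1 h2
    rw [hA]; linarith

theorem stmt6 (p θ φp φm : ℝ) (hp : p ∈ Set.Ioc (0 : ℝ) 1)
    (hθ : θ ∈ Set.Icc (-(Real.pi / 2)) (Real.pi / 2))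
    (hφp : φp ∈ Set.Ioo |θ| Real.pi ∧
      p * (Real.cos φp - Real.cos θ) + (φp - θ) * Real.sin φp = 0)
    (hφm : -φm ∈ Set.Ioo |θ| Real.pi ∧
      p * (Real.cos (-φm) - Real.cos (-θ)) + (-φm - -θ) * Real.sin (-φm) = 0) :
    (∀ x : ℝ, θ ≤ x → Real.cos θ - A p θ * (x - θ) ^ p ≤ Real.cos x) ∧
    (∀ x : ℝ, x < θ → Real.cos θ - A p (-θ) * (θ - x) ^ p ≤ Real.cos x) ∧
    (∀ x : ℝ,
      (Real.cos x =
        if θ ≤ x then Real.cos θ - A p θ * (x - θ) ^ p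
        else Real.cos θ - A p (-θ) * (θ - x) ^ p) ↔ (x = θ ∨ x = φp ∨ x = φm)) := by
  obtain ⟨hp0, hp1⟩ := hp
  obtain ⟨hθ1, hθ2⟩ := hθ
  have hθabs : |θ| ≤ π / 2 := abs_le.2 ⟨by linarith, hθ2⟩
  obtain ⟨⟨hφp1, hφp2⟩, hφpeq⟩ := hφp
  obtain ⟨⟨hφm1, hφm2⟩, hφmeq⟩ := hφm
  have hmain1 := st6main p θ φp hp0 hp1 hθabs hφp1 hφp2 hφpeq
  have hθabs' : |(-θ)| ≤ π / 2 := by rw [abs_neg]; exact hθabs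
  have hφm1' : |(-θ)| < -φm := by rw [abs_neg]; exact hφm1
  have hmain2 := st6main p (-θ) (-φm) hp0 hp1 hθabs' hφm1' hφm2 hφmeq
  have haθ := le_abs_self θ
  have hnegθ := neg_abs_le θ
  have hθφp : θ < φp := lt_of_le_of_lt haθ hφp1
  have hφmθ : φm < θ := by linarith
  have part1 : ∀ x : ℝ, θ ≤ x → Real.cos θ - A p θ * (x - θ) ^ p ≤ Real.cos x := by
    intro x hx
    rcases eq_or_lt_of_le hx with h | h
    · rw [← h]
      simp [Real.zero_rpow (ne_of_gt hp0)]
    · by_cases hxφ : x = φp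
      · rw [hxφ]; exact le_of_eq hmain1.1
      · exact (hmain1.2 x h hxφ).le
  have part2 : ∀ x : ℝ, x < θ → Real.cos θ - A p (-θ) * (θ - x) ^ p ≤ Real.cos x := by
    intro x hx
    have h1 : -θ < -x := by linarith
    rw [show θ - x = -x - -θ by ring, ← Real.cos_neg θ, ← Real.cos_neg x]
    by_cases hxφ : -x = -φm
    · rw [hxφ]; exact le_of_eq hmain2.1
    · exact (hmain2.2 (-x) h1 hxφ).le
  refine ⟨part1, part2, ?_⟩
  intro x
  by_cases hx : θ ≤ x
  · rw [if_pos hx]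
    constructor
    · intro heqx
      rcases eq_or_lt_of_le hx with h | h
      · exact Or.inl h.symm
      · by_cases hxφ : x = φp
        · exact Or.inr (Or.inl hxφ)
        · exfalso
          have := hmain1.2 x h hxφ
          linarith
    · rintro (h | h | h)
      · subst h
        simp [Real.zero_rpow (ne_of_gt hp0)]
      · subst h
        exact hmain1.1.symm
      · exfalso; subst h; linarith
  · rw [if_neg hx]
    push_neg at hx
    constructor
    · intro heqx
      right; right
      by_contra hxφ
      have hx2 : -x ≠ -φm := fun hcon => hxφ (neg_injective hcon)
      have hlt := hmain2.2 (-x) (by linarith) hx2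
      rw [Real.cos_neg, Real.cos_neg, show -x - -θ = θ - x by ring] at hlt
      linarith
    · rintro (h | h | h)
      · exfalso; rw [h] at hx; exact lt_irrefl θ hx
      · exfalso; subst h; linarith
      · rw [h]
        have heq2 := hmain2.1
        rw [Real.cos_neg, Real.cos_neg, show -φm - -θ = θ - φm by ring] at heq2
        exact heq2.symm
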